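/- Let σ₁₃, σ₂₃ ≥ 0 and take α = 3. Define γ₂ : ℝ → ℝ by γ₂(φ) = (3/(2√2))·[σ₁₃((1+φ)/2)²(2−φ) + σ₂₃((1−φ)/2)²(2+φ) + (3/16)|σ₂₃−σ₁₃|(1−φ²)²]. Then γ₂″(φ) ≥ 0 for every φ with |φ| ≥ 1, i.e. γ₂ is convex outside the interval (−1, 1). -/

import Mathlib

lemma hasDerivAt_quartic (a b c d e x : ℝ) :
    HasDerivAt (fun x : ℝ => a + b * x + c * x ^ 2 + d * x ^ 3 + e * x ^ 4)
      (b + 2 * c * x + 3 * d * x ^ 2 + 4 * e * x ^ 3) x := by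
  have h := ((((hasDerivAt_const x a).add ((hasDerivAt_id x).const_mul b)).add
      ((hasDerivAt_pow 2 x).const_mul c)).add
      ((hasDerivAt_pow 3 x).const_mul d)).add ((hasDerivAt_pow 4 x).const_mul e)
  convert h using 1
  · rfl
  · rfl
  · funext y; simp only [Pi.add_apply, id]
  · push_cast; ring

/-- For `σ₁₃, σ₂₃ ≥ 0` and `α = 3`, the interpolation
`γ₂(φ) = (3/(2√2))·[σ₁₃((1+φ)/2)²(2−φ) + σ₂₃((1−φ)/2)²(2+φ) + (3/16)|σ₂₃−σ₁₃|(1−φ²)²]`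
satisfies `γ₂″(φ) ≥ 0` whenever `|φ| ≥ 1`, i.e. it is convex outside the
interval `(−1, 1)`. -/
theorem gamma2_convex_outside (σ₁₃ σ₂₃ : ℝ) (h13 : 0 ≤ σ₁₃) (h23 : 0 ≤ σ₂₃)
    (γ₂ : ℝ → ℝ)
    (hγ₂ : ∀ φ : ℝ, γ₂ φ =
      3 / (2 * Real.sqrt 2) *
        (σ₁₃ * ((1 + φ) / 2) ^ 2 * (2 - φ) + σ₂₃ * ((1 - φ) / 2) ^ 2 * (2 + φ) +
          3 / 16 * |σ₂₃ - σ₁₃| * (1 - φ ^ 2) ^ 2)) :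
    ∀ φ : ℝ, 1 ≤ |φ| → 0 ≤ deriv (deriv γ₂) φ := by
  intro φ hφ
  set c0 : ℝ := 3 / (2 * Real.sqrt 2) with hc0def
  set M : ℝ := 3 / 16 * |σ₂₃ - σ₁₃| with hMdef
  have hfun : γ₂ = fun x : ℝ =>
      (c0 * (σ₁₃ / 2 + σ₂₃ / 2 + M)) + (c0 * (3 * σ₁₃ / 4 - 3 * σ₂₃ / 4)) * x +
        (-2 * c0 * M) * x ^ 2 + (c0 * (σ₂₃ / 4 - σ₁₃ / 4)) * x ^ 3 + (c0 * M) * x ^ 4 := by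
    funext x; rw [hγ₂ x]; ring
  have hd1 : deriv γ₂ = fun x : ℝ =>
      (c0 * (3 * σ₁₃ / 4 - 3 * σ₂₃ / 4)) + 2 * (-2 * c0 * M) * x +
        3 * (c0 * (σ₂₃ / 4 - σ₁₃ / 4)) * x ^ 2 + 4 * (c0 * M) * x ^ 3 := by
    funext x
    rw [hfun]
    exact (hasDerivAt_quartic _ _ _ _ _ x).deriv
  have hd1' : deriv γ₂ = fun x : ℝ =>
      (c0 * (3 * σ₁₃ / 4 - 3 * σ₂₃ / 4)) + (2 * (-2 * c0 * M)) * x +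
        (3 * (c0 * (σ₂₃ / 4 - σ₁₃ / 4))) * x ^ 2 + (4 * (c0 * M)) * x ^ 3 +
        (0 : ℝ) * x ^ 4 := by
    rw [hd1]; funext x; ring
  have hd2 : deriv (deriv γ₂) φ =
      (2 * (-2 * c0 * M)) + 2 * (3 * (c0 * (σ₂₃ / 4 - σ₁₃ / 4))) * φ +
        3 * (4 * (c0 * M)) * φ ^ 2 + 4 * (0 : ℝ) * φ ^ 3 := by
    rw [hd1']
    exact (hasDerivAt_quartic _ _ _ _ _ φ).deriv
  rw [hd2, hMdef]
  have hc0 : 0 ≤ c0 := by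
    have : 0 < Real.sqrt 2 := Real.sqrt_pos.mpr (by norm_num)
    positivity
  have ha : 0 ≤ |σ₂₃ - σ₁₃| := abs_nonneg _
  have ht : 1 ≤ |φ| := hφ
  have ht2 : |φ| ^ 2 = φ ^ 2 := sq_abs φ
  have hprod : -(|σ₂₃ - σ₁₃| * |φ|) ≤ (σ₂₃ - σ₁₃) * φ := by
    rw [← abs_mul]; exact neg_abs_le _
  have hquad : 0 ≤ 3 * φ ^ 2 - 2 * |φ| - 1 := by nlinarith
  have hX : 0 ≤ c0 * ((σ₂₃ - σ₁₃) * φ + |σ₂₃ - σ₁₃| * |φ|) := by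
    apply mul_nonneg hc0; linarith
  have hY : 0 ≤ c0 * (|σ₂₃ - σ₁₃| * (3 * φ ^ 2 - 2 * |φ| - 1)) :=
    mul_nonneg hc0 (mul_nonneg ha hquad)
  linarith [hX, hY]
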